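/- Let γ in Z^ℓ with ∑_{a=k}^{ℓ} γ_a < 0 for some k in [ℓ]. Then the polynomial truncation of the monomial x^γ is zero, i.e., when x^γ is expanded in the basis of key polynomials κ_α (α in Z^ℓ), no α in Z_{≥0}^ℓ appears with nonzero coefficient. -/

import Mathlib

open MvPolynomial

noncomputable section

abbrev Kf (ℓ : ℕ) : Type := FractionRing (MvPolynomial (Fin ℓ) ℤ)

noncomputable def Xv (ℓ : ℕ) (i : ℕ) : Kf ℓ :=
  if h : i < ℓ then algebraMap (MvPolynomial (Fin ℓ) ℤ) (Kf ℓ) (X ⟨i, h⟩) else 1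

noncomputable def swapAlg (ℓ i : ℕ) :
    MvPolynomial (Fin ℓ) ℤ ≃ₐ[ℤ] MvPolynomial (Fin ℓ) ℤ :=
  if h : i + 1 < ℓ then
    renameEquiv ℤ (Equiv.swap ⟨i, Nat.lt_of_succ_lt h⟩ ⟨i + 1, h⟩)
  else AlgEquiv.refl

noncomputable def swapK (ℓ i : ℕ) : Kf ℓ →+* Kf ℓ :=
  IsFractionRing.lift (g := (algebraMap (MvPolynomial (Fin ℓ) ℤ) (Kf ℓ)).comp
      (swapAlg ℓ i).toAlgHom.toRingHom)
    (by rw [RingHom.coe_comp]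
        exact (IsFractionRing.injective _ _).comp (swapAlg ℓ i).injective)

noncomputable def dem (ℓ i : ℕ) (f : Kf ℓ) : Kf ℓ :=
  (Xv ℓ i * f - Xv ℓ (i + 1) * swapK ℓ i f) / (Xv ℓ i - Xv ℓ (i + 1))

noncomputable def monK (ℓ : ℕ) (α : Fin ℓ → ℤ) : Kf ℓ := ∏ i : Fin ℓ, Xv ℓ i ^ α i

def swapVec (ℓ i : ℕ) (α : Fin ℓ → ℤ) : Fin ℓ → ℤ :=
  if h : i + 1 < ℓ then α ∘ Equiv.swap ⟨i, Nat.lt_of_succ_lt h⟩ ⟨i + 1, h⟩ else α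

def ascAt (ℓ : ℕ) (α : Fin ℓ → ℤ) (i : ℕ) : Prop :=
  ∃ h : i + 1 < ℓ, α ⟨i, Nat.lt_of_succ_lt h⟩ < α ⟨i + 1, h⟩

instance (ℓ : ℕ) (α : Fin ℓ → ℤ) (i : ℕ) : Decidable (ascAt ℓ α i) := by
  unfold ascAt; infer_instance

/-- The key polynomial computed with the given amount of fuel: repeatedly pick an
ascent `i` of `α` (a position with `α i < α (i+1)`) and use `κ_α = π_i κ_{s_i α}`;
for antitone `α`, `κ_α = x^α`. -/
noncomputable def keyAux (ℓ : ℕ) : ℕ → (Fin ℓ → ℤ) → Kf ℓ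
  | 0, α => monK ℓ α
  | n + 1, α =>
    if h : ∃ i : Fin ℓ, ascAt ℓ α (i : ℕ) then
      dem ℓ (h.choose : ℕ) (keyAux ℓ n (swapVec ℓ (h.choose : ℕ) α))
    else monK ℓ α

/-- The key polynomial `κ_α = π_{p(α)} x^{α⁺}`, `α ∈ ℤ^ℓ`, as an element of the
fraction field; fuel `ℓ * ℓ` always suffices. -/
noncomputable def keyPoly (ℓ : ℕ) (α : Fin ℓ → ℤ) : Kf ℓ := keyAux ℓ (ℓ * ℓ) α

/-- A finite ℤ-linear combination of key polynomials. -/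
noncomputable def keyComb (ℓ : ℕ) (c : (Fin ℓ → ℤ) →₀ ℤ) : Kf ℓ :=
  c.sum fun α k => k • keyPoly ℓ α

/-- The positive (polynomial) part of a ℤ-linear combination of key polynomials:
only the terms `κ_α` with `α ∈ ℤ_{≥0}^ℓ` are kept. -/
noncomputable def keyCombPos (ℓ : ℕ) (c : (Fin ℓ → ℤ) →₀ ℤ) : Kf ℓ :=
  c.sum fun α k => if ∀ i, 0 ≤ α i then k • keyPoly ℓ α else 0


set_option synthInstance.maxHeartbeats 1000000
set_option maxHeartbeats 1000000

namespace PTAux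

open Finset

variable {ℓ : ℕ}

/-- number of elements of `S` with index `≥ k`. -/
def g (S : Finset (Fin ℓ)) (k : ℕ) : ℕ := (S.filter fun a : Fin ℓ => k ≤ (a : ℕ)).card

/-- the tail set `{k, …, ℓ-1}`. -/
def Tk (ℓ k : ℕ) : Finset (Fin ℓ) := Finset.univ.filter fun a : Fin ℓ => k ≤ (a : ℕ)

/-- Gale-type order via counting. -/
def Ge (S' S : Finset (Fin ℓ)) : Prop := S'.card = S.card ∧ ∀ k : ℕ, g S k ≤ g S' k

lemma Ge.refl (S : Finset (Fin ℓ)) : Ge S S := ⟨rfl, fun _ => le_rfl⟩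

lemma g_step (S : Finset (Fin ℓ)) (c : Fin ℓ) :
    g S (c : ℕ) = g S ((c : ℕ) + 1) + (if c ∈ S then 1 else 0) := by
  classical
  have hsplit : S.filter (fun a : Fin ℓ => (c:ℕ) ≤ (a:ℕ)) =
      (S.filter fun a : Fin ℓ => (c:ℕ)+1 ≤ (a:ℕ)) ∪ (S.filter fun a : Fin ℓ => a = c) := by
    ext x
    simp only [mem_filter, mem_union]
    constructor
    · rintro ⟨hx, h⟩
      rcases eq_or_lt_of_le h with h' | h'
      · exact Or.inr ⟨hx, by ext; omega⟩
      · exact Or.inl ⟨hx, h'⟩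
    · rintro (⟨hx, h⟩ | ⟨hx, h⟩)
      · exact ⟨hx, by omega⟩
      · exact ⟨hx, by subst h; omega⟩
  have hdisj : Disjoint (S.filter fun a : Fin ℓ => (c:ℕ)+1 ≤ (a:ℕ)) (S.filter fun a : Fin ℓ => a = c) := by
    rw [Finset.disjoint_left]
    rintro x hx hx'
    simp only [mem_filter] at hx hx'
    rw [hx'.2] at hx
    omega
  rw [g, hsplit, Finset.card_union_of_disjoint hdisj]
  congr 1
  rw [Finset.filter_eq' S c]
  split <;> simp

lemma g_zero_of_ge (S : Finset (Fin ℓ)) {k : ℕ} (h : ℓ ≤ k) : g S k = 0 := by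
  rw [g, Finset.card_eq_zero, Finset.filter_eq_empty_iff]
  intro a _
  have := a.isLt; omega



def U (S : Finset (Fin ℓ)) (δ : Fin ℓ → ℤ) : ℤ :=
  letI : DecidablePred (fun S' : Finset (Fin ℓ) => Ge S' S) := fun _ => Classical.dec _
  (Finset.univ.filter fun S' : Finset (Fin ℓ) => Ge S' S).sup'
    ⟨S, by simp [Ge.refl]⟩ (fun S' => ∑ x ∈ S', δ x)

lemma le_U {S' S : Finset (Fin ℓ)} (δ : Fin ℓ → ℤ) (h : Ge S' S) :
    ∑ x ∈ S', δ x ≤ U S δ := by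
  classical
  apply Finset.le_sup' (f := fun S' => ∑ x ∈ S', δ x)
  simp only [Finset.mem_filter, Finset.mem_univ, true_and]
  convert h
  
lemma U_le {S : Finset (Fin ℓ)} {δ : Fin ℓ → ℤ} {B : ℤ}
    (h : ∀ S', Ge S' S → ∑ x ∈ S', δ x ≤ B) : U S δ ≤ B := by
  classical
  apply Finset.sup'_le
  intro S' hS'
  simp only [Finset.mem_filter, Finset.mem_univ, true_and] at hS'
  exact h S' hS'

lemma sum_le_U (S : Finset (Fin ℓ)) (δ : Fin ℓ → ℤ) : ∑ x ∈ S, δ x ≤ U S δ :=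
  le_U δ (Ge.refl S)



lemma Ge_Tk {S' : Finset (Fin ℓ)} {k : ℕ} (h : Ge S' (Tk ℓ k)) : S' = Tk ℓ k := by
  classical
  have hTk : g (Tk ℓ k) k = (Tk ℓ k).card := by
    rw [g]
    congr 1
    apply Finset.filter_true_of_mem
    intro x hx
    simp only [Tk, Finset.mem_filter] at hx
    exact hx.2
  have h1 : (S'.filter fun a : Fin ℓ => k ≤ (a:ℕ)) = S' := by
    apply Finset.eq_of_subset_of_card_le (Finset.filter_subset _ _)
    have := h.2 k
    rw [hTk, ← h.1] at this
    exact this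
  have h2 : S' ⊆ Tk ℓ k := by
    intro x hx
    rw [← h1] at hx
    simp only [Finset.mem_filter] at hx
    simp only [Tk, Finset.mem_filter, Finset.mem_univ, true_and]
    exact hx.2
  exact Finset.eq_of_subset_of_card_le h2 (le_of_eq h.1.symm)

lemma U_Tk (k : ℕ) (δ : Fin ℓ → ℤ) : U (Tk ℓ k) δ = ∑ x ∈ Tk ℓ k, δ x := by
  refine le_antisymm (U_le fun S' h => ?_) (sum_le_U _ _)
  rw [Ge_Tk h]

def tl (ℓ k : ℕ) (β : Fin ℓ → ℤ) : ℤ := ∑ x ∈ Tk ℓ k, β x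

lemma tl_of_ge {k : ℕ} (h : ℓ ≤ k) (β : Fin ℓ → ℤ) : tl ℓ k β = 0 := by
  rw [tl]
  convert Finset.sum_empty
  rw [Tk, Finset.filter_eq_empty_iff]
  intro a _
  have := a.isLt; omega

lemma Tk_zero : Tk ℓ 0 = Finset.univ := by
  rw [Tk]; apply Finset.filter_true_of_mem; intro x _; omega

lemma Tk_succ_insert {k : ℕ} (hk : k < ℓ) : Tk ℓ k = insert ⟨k, hk⟩ (Tk ℓ (k+1)) := by
  ext x
  simp only [Tk, Finset.mem_filter, Finset.mem_univ, true_and, Finset.mem_insert,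
    Fin.ext_iff]
  omega

lemma tl_step {k : ℕ} (hk : k < ℓ) (β : Fin ℓ → ℤ) :
    tl ℓ k β = β ⟨k, hk⟩ + tl ℓ (k+1) β := by
  rw [tl, tl, Tk_succ_insert hk, Finset.sum_insert]
  simp only [Tk, Finset.mem_filter, Finset.mem_univ, true_and]
  omega

def Pre (ℓ : ℕ) (β α : Fin ℓ → ℤ) : Prop :=
  tl ℓ 0 β = tl ℓ 0 α ∧ ∀ k : ℕ, tl ℓ k β ≤ tl ℓ k α

lemma Pre.refl (α : Fin ℓ → ℤ) : Pre ℓ α α := ⟨rfl, fun _ => le_rfl⟩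

lemma Pre.trans {α β γ' : Fin ℓ → ℤ} (h1 : Pre ℓ α β) (h2 : Pre ℓ β γ') : Pre ℓ α γ' :=
  ⟨h1.1.trans h2.1, fun k => (h1.2 k).trans (h2.2 k)⟩

lemma eq_of_tl_eq {β α : Fin ℓ → ℤ} (h : ∀ k : ℕ, tl ℓ k β = tl ℓ k α) : β = α := by
  funext x
  have h1 := tl_step x.isLt β
  have h2 := tl_step x.isLt α
  have hx : (⟨(x:ℕ), x.isLt⟩ : Fin ℓ) = x := by ext; rfl
  rw [hx] at h1 h2
  have := h (x:ℕ)
  have := h ((x:ℕ)+1)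
  omega

lemma rank_lt {β α : Fin ℓ → ℤ} (h : Pre ℓ β α) (hne : β ≠ α) :
    ∑ k ∈ Finset.range ℓ, tl ℓ k β < ∑ k ∈ Finset.range ℓ, tl ℓ k α := by
  apply Finset.sum_lt_sum
  · intro k _; exact h.2 k
  · by_contra hall
    push_neg at hall
    apply hne
    apply eq_of_tl_eq
    intro k
    rcases Nat.lt_or_ge k ℓ with hk | hk
    · exact le_antisymm (h.2 k) (hall k (Finset.mem_range.mpr hk))
    · rw [tl_of_ge hk, tl_of_ge hk]

lemma between_bound {c t x σ : ℤ} (h : (0 ≤ c ∧ c ≤ t) ∨ (t ≤ c ∧ c ≤ 0)) :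
    x - c*σ ≤ max x (x - t*σ) := by
  rcases h with ⟨h1, h2⟩ | ⟨h1, h2⟩ <;> rcases le_total 0 σ with hσ | hσ
  · have : 0 ≤ c * σ := mul_nonneg h1 hσ
    exact le_trans (by omega) (le_max_left _ _)
  · have : t * σ ≤ c * σ := mul_le_mul_of_nonpos_right h2 hσ
    exact le_trans (by omega) (le_max_right _ _)
  · have : t * σ ≤ c * σ := mul_le_mul_of_nonneg_right h1 hσ
    exact le_trans (by omega) (le_max_right _ _)
  · have : 0 ≤ c * σ := by nlinarith
    exact le_trans (by omega) (le_max_left _ _)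


section swap
variable {a b : Fin ℓ} (hab : (a : ℕ) + 1 = (b : ℕ))


lemma swap_val_a : ((Equiv.swap a b a : Fin ℓ) : ℕ) = (b : ℕ) := by rw [Equiv.swap_apply_left]
lemma swap_val_b : ((Equiv.swap a b b : Fin ℓ) : ℕ) = (a : ℕ) := by rw [Equiv.swap_apply_right]
lemma swap_val_other {x : Fin ℓ} (hx : x ≠ a) (hx' : x ≠ b) :
    ((Equiv.swap a b x : Fin ℓ) : ℕ) = (x : ℕ) := by rw [Equiv.swap_apply_of_ne_of_ne hx hx']

include hab

lemma ane : a ≠ b := by intro h; rw [h] at hab; omega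

omit hab in
lemma g_image (S : Finset (Fin ℓ)) (k : ℕ) :
    g (S.image (Equiv.swap a b)) k = (S.filter fun x : Fin ℓ => k ≤ ((Equiv.swap a b x : Fin ℓ) : ℕ)).card := by
  classical
  rw [g, Finset.filter_image, Finset.card_image_of_injective _ (Equiv.injective _)]

lemma g_image_of_ne (S : Finset (Fin ℓ)) {k : ℕ} (hk : k ≤ (a : ℕ) ∨ (b : ℕ) < k) :
    g (S.image (Equiv.swap a b)) k = g S k := by
  classical
  rw [g_image, g]
  congr 1
  apply Finset.filter_congr
  intro x _
  by_cases hx : x = a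
  · subst hx; rw [swap_val_a]; omega
  by_cases hx' : x = b
  · subst hx'; rw [swap_val_b]; omega
  · rw [swap_val_other hx hx']

lemma g_image_at_b (S : Finset (Fin ℓ)) :
    g (S.image (Equiv.swap a b)) (b : ℕ) = g S ((b : ℕ) + 1) + (if a ∈ S then 1 else 0) := by
  classical
  rw [g_image]
  have hsplit : (S.filter fun x : Fin ℓ => (b:ℕ) ≤ ((Equiv.swap a b x : Fin ℓ) : ℕ)) =
      (S.filter fun x : Fin ℓ => (b:ℕ)+1 ≤ (x:ℕ)) ∪ (S.filter fun x : Fin ℓ => x = a) := by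
    ext x
    simp only [mem_filter, mem_union]
    by_cases hx : x = a
    · subst hx
      rw [swap_val_a]
      constructor
      · rintro ⟨h, _⟩; exact Or.inr ⟨h, rfl⟩
      · rintro (⟨h, h'⟩ | ⟨h, _⟩) <;> simp [h]
    by_cases hx' : x = b
    · subst hx'
      rw [swap_val_b]
      constructor
      · rintro ⟨_, h⟩; omega
      · rintro (⟨h, h'⟩ | ⟨h, h'⟩)
        · omega
        · exact absurd h' hx
    · rw [swap_val_other hx hx']
      have : ((x:ℕ) = (b:ℕ)) → x = b := by intro h; ext; omega
      constructor
      · rintro ⟨h, h'⟩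
        refine Or.inl ⟨h, ?_⟩
        rcases eq_or_lt_of_le h' with h'' | h''
        · exact absurd (this h''.symm ▸ rfl : x = b) hx'
        · omega
      · rintro (⟨h, h'⟩ | ⟨h, h'⟩)
        · exact ⟨h, by omega⟩
        · exact absurd h' hx
  rw [hsplit, Finset.card_union_of_disjoint]
  · congr 1
    rw [Finset.filter_eq' S a]
    split <;> simp
  · rw [Finset.disjoint_left]
    rintro x hx hx'
    simp only [mem_filter] at hx hx'
    rw [hx'.2] at hx
    omega

lemma card_image_swap (S : Finset (Fin ℓ)) : (S.image (Equiv.swap a b)).card = S.card :=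
  Finset.card_image_of_injective _ (Equiv.injective _)

/-- Main combinatorial lemma. -/
lemma ML {S S'' : Finset (Fin ℓ)}
    (h : Ge S'' S ∨ Ge S'' (S.image (Equiv.swap a b))) :
    Ge (S''.image (Equiv.swap a b)) S ∨ (Ge S'' S ∧ b ∈ S'' ∧ a ∉ S'') := by
  classical
  have hcard : S''.card = S.card := by
    rcases h with h | h
    · exact h.1
    · rw [h.1, card_image_swap hab]
  have hgen : ∀ k : ℕ, g S k ≤ g S'' k ∨ ((b:ℕ) ≤ k ∧ k ≤ (b:ℕ)) := by
    intro k
    rcases Nat.lt_or_ge k (b:ℕ) with hk | hk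
    · left
      have hk' : k ≤ (a:ℕ) ∨ (b:ℕ) < k := by omega
      rcases h with h | h
      · exact h.2 k
      · have := h.2 k; rwa [g_image_of_ne hab _ hk'] at this
    rcases Nat.lt_or_ge (b:ℕ) k with hk2 | hk2
    · left
      have hk' : k ≤ (a:ℕ) ∨ (b:ℕ) < k := Or.inr hk2
      rcases h with h | h
      · exact h.2 k
      · have := h.2 k; rwa [g_image_of_ne hab _ hk'] at this
    · right; omega
  -- the only delicate threshold is k = b
  have hSb : g S (b:ℕ) = g S ((b:ℕ)+1) + (if b ∈ S then 1 else 0) := g_step S b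
  have hS''b : g S'' (b:ℕ) = g S'' ((b:ℕ)+1) + (if b ∈ S'' then 1 else 0) := g_step S'' b
  have htail : g S ((b:ℕ)+1) ≤ g S'' ((b:ℕ)+1) := by
    rcases hgen ((b:ℕ)+1) with h' | h'
    · exact h'
    · omega
  by_cases hbS : b ∈ S
  · rw [if_pos hbS] at hSb
    by_cases haS'' : a ∈ S''
    · -- first disjunct
      left
      refine ⟨by rw [card_image_swap hab, hcard], fun k => ?_⟩
      rcases Nat.lt_or_ge k (b:ℕ) with hk | hk
      · rw [g_image_of_ne hab _ (by omega)]
        rcases hgen k with h' | h' 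
        · exact h'
        · omega
      rcases Nat.lt_or_ge (b:ℕ) k with hk2 | hk2
      · rw [g_image_of_ne hab _ (by omega)]
        rcases hgen k with h' | h'
        · exact h'
        · omega
      · have hkb : k = (b:ℕ) := by omega
        subst hkb
        rw [g_image_at_b hab, if_pos haS'']
        omega
    · by_cases hbS'' : b ∈ S''
      · -- second disjunct
        right
        rw [if_pos hbS''] at hS''b
        refine ⟨⟨hcard, fun k => ?_⟩, hbS'', haS''⟩
        rcases hgen k with h' | h'
        · exact h'
        · have hkb : k = (b:ℕ) := by omega
          subst hkb
          omega
      · -- first disjunct via threshold k = a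
        left
        rw [if_neg hbS''] at hS''b
        have hSa : g S (a:ℕ) = g S ((a:ℕ)+1) + (if a ∈ S then 1 else 0) := g_step S a
        have hS''a : g S'' (a:ℕ) = g S'' ((a:ℕ)+1) + (if a ∈ S'' then 1 else 0) := g_step S'' a
        rw [hab] at hSa hS''a
        rw [if_neg haS''] at hS''a
        have hha : g S (a:ℕ) ≤ g S'' (a:ℕ) := by
          rcases hgen (a:ℕ) with h'' | h''
          · exact h''
          · omega
        refine ⟨by rw [card_image_swap hab, hcard], fun k => ?_⟩
        rcases Nat.lt_or_ge k (b:ℕ) with hk | hk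
        · rw [g_image_of_ne hab _ (by omega)]
          rcases hgen k with h' | h' 
          · exact h'
          · omega
        rcases Nat.lt_or_ge (b:ℕ) k with hk2 | hk2
        · rw [g_image_of_ne hab _ (by omega)]
          rcases hgen k with h' | h'
          · exact h'
          · omega
        · have hkb : k = (b:ℕ) := by omega
          subst hkb
          rw [g_image_at_b hab, if_neg haS'']
          omega
  · -- b ∉ S : first disjunct, easy at k = b
    left
    rw [if_neg hbS] at hSb
    refine ⟨by rw [card_image_swap hab, hcard], fun k => ?_⟩
    rcases Nat.lt_or_ge k (b:ℕ) with hk | hk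
    · rw [g_image_of_ne hab _ (by omega)]
      rcases hgen k with h' | h' 
      · exact h'
      · omega
    rcases Nat.lt_or_ge (b:ℕ) k with hk2 | hk2
    · rw [g_image_of_ne hab _ (by omega)]
      rcases hgen k with h' | h'
      · exact h'
      · omega
    · have hkb : k = (b:ℕ) := by omega
      subst hkb
      rw [g_image_at_b hab]
      split <;> omega


omit hab in
lemma sum_swap_image (S : Finset (Fin ℓ)) (δ : Fin ℓ → ℤ) :
    ∑ x ∈ S.image (Equiv.swap a b), δ x = ∑ x ∈ S, δ (Equiv.swap a b x) := by
  rw [Finset.sum_image (fun x _ y _ h => Equiv.injective _ h)]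

omit hab in
lemma comp_swap_sum (S : Finset (Fin ℓ)) (δ : Fin ℓ → ℤ) :
    ∑ x ∈ S, (δ ∘ Equiv.swap a b) x = ∑ x ∈ S.image (Equiv.swap a b), δ x := by
  rw [sum_swap_image]; rfl

/-- stability of the `U` bounds under an ascent swap. -/
lemma CU {α : Fin ℓ → ℤ} (hasc : α a < α b) (S : Finset (Fin ℓ)) :
    U S (α ∘ Equiv.swap a b) ≤ U S α ∧ U (S.image (Equiv.swap a b)) (α ∘ Equiv.swap a b) ≤ U S α := by
  classical
  have key : ∀ S'' : Finset (Fin ℓ), (Ge S'' S ∨ Ge S'' (S.image (Equiv.swap a b))) →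
      ∑ x ∈ S'', (α ∘ Equiv.swap a b) x ≤ U S α := by
    intro S'' h
    have hML := ML hab h
    rcases hML with hML | ⟨hGe, hbS'', haS''⟩
    · calc ∑ x ∈ S'', (α ∘ Equiv.swap a b) x
          = ∑ x ∈ S''.image (Equiv.swap a b), α x := (comp_swap_sum S'' α).symm ▸ rfl
        _ ≤ U S α := le_U α hML
    · have h1 : ∑ x ∈ S'', (α ∘ Equiv.swap a b) x ≤ ∑ x ∈ S'', α x := by
        apply Finset.sum_le_sum
        intro x hx
        by_cases hxa : x = a
        · subst hxa; exact absurd hx haS''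
        by_cases hxb : x = b
        · subst hxb
          simp only [Function.comp_apply, Equiv.swap_apply_right]
          exact le_of_lt hasc
        · simp [Function.comp_apply, Equiv.swap_apply_of_ne_of_ne hxa hxb]
      exact h1.trans (le_U α hGe)
  constructor
  · apply U_le
    intro S' hS'
    exact key S' (Or.inl hS')
  · apply U_le
    intro S' hS'
    exact key S' (Or.inr hS')



def rv (a b : Fin ℓ) : Fin ℓ → ℤ := fun x => if x = a then 1 else if x = b then -1 else 0

omit hab in
lemma rv_eq_add (hne : a ≠ b) : rv a b = fun x => (if x = a then (1:ℤ) else 0) + (if x = b then (-1:ℤ) else 0) := by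
  funext x
  by_cases hx : x = a
  · subst hx
    simp [rv, hne]
  by_cases hx' : x = b
  · subst hx'
    simp [rv, hx]
  · simp [rv, hx, hx']

omit hab in
lemma sum_rv (hne : a ≠ b) (S : Finset (Fin ℓ)) :
    ∑ x ∈ S, rv a b x = (if a ∈ S then 1 else 0) - (if b ∈ S then 1 else 0) := by
  classical
  rw [rv_eq_add hne, Finset.sum_add_distrib, Finset.sum_ite_eq' S a (fun _ => (1:ℤ)),
    Finset.sum_ite_eq' S b (fun _ => (-1:ℤ))]
  split <;> split <;> ring

omit hab in
lemma comp_swap_eq (hne : a ≠ b) (β : Fin ℓ → ℤ) :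
    β ∘ Equiv.swap a b = fun x => β x - (β a - β b) * rv a b x := by
  funext x
  simp only [Function.comp_apply, rv]
  by_cases hx : x = a
  · subst hx; rw [Equiv.swap_apply_left, if_pos rfl]; ring
  by_cases hx' : x = b
  · subst hx'; rw [Equiv.swap_apply_right, if_neg hx, if_pos rfl]; ring
  · rw [Equiv.swap_apply_of_ne_of_ne hx hx', if_neg hx, if_neg hx']; ring

lemma U_insert_le (δ : Fin ℓ → ℤ) :
    U (insert a (Tk ℓ ((b:ℕ)+1))) δ ≤ max (δ a) (δ b) + ∑ x ∈ Tk ℓ ((b:ℕ)+1), δ x := by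
  classical
  set T2 := Tk ℓ ((b:ℕ)+1) with hT2
  have haT2 : a ∉ T2 := by
    simp only [hT2, Tk, Finset.mem_filter, Finset.mem_univ, true_and]
    omega
  apply U_le
  intro S' h
  have hcardS : (insert a T2).card = T2.card + 1 := Finset.card_insert_of_notMem haT2
  -- T2 ⊆ S'
  have hg2 : g (insert a T2) ((b:ℕ)+1) = T2.card := by
    rw [g, Finset.filter_insert, if_neg (by omega)]
    congr 1
    apply Finset.filter_true_of_mem
    intro x hx
    simp only [hT2, Tk, Finset.mem_filter] at hx
    exact hx.2
  have hfiltS' : (S'.filter fun x : Fin ℓ => (b:ℕ)+1 ≤ (x:ℕ)) ⊆ T2 := by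
    intro x hx
    simp only [Finset.mem_filter] at hx
    simp only [hT2, Tk, Finset.mem_filter, Finset.mem_univ, true_and]
    exact hx.2
  have hT2S' : T2 ⊆ S' := by
    have hle := h.2 ((b:ℕ)+1)
    rw [hg2] at hle
    have heq : (S'.filter fun x : Fin ℓ => (b:ℕ)+1 ≤ (x:ℕ)) = T2 :=
      Finset.eq_of_subset_of_card_le hfiltS' hle
    rw [← heq]
    exact Finset.filter_subset _ _
  -- S' ⊆ {x | a ≤ x}
  have hga : g (insert a T2) (a:ℕ) = (insert a T2).card := by
    rw [g]
    congr 1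
    apply Finset.filter_true_of_mem
    intro x hx
    rcases Finset.mem_insert.mp hx with hx' | hx'
    · subst hx'; omega
    · simp only [hT2, Tk, Finset.mem_filter] at hx'
      omega
  have hS'a : ∀ x ∈ S', (a:ℕ) ≤ (x:ℕ) := by
    have hle := h.2 (a:ℕ)
    rw [hga, ← h.1] at hle
    have heq : (S'.filter fun x : Fin ℓ => (a:ℕ) ≤ (x:ℕ)) = S' :=
      Finset.eq_of_subset_of_card_le (Finset.filter_subset _ _) hle
    intro x hx
    rw [← heq] at hx
    exact (Finset.mem_filter.mp hx).2
  -- the extra element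
  have hcard1 : (S' \ T2).card = 1 := by
    rw [Finset.card_sdiff_of_subset hT2S', h.1, hcardS]
    omega
  obtain ⟨x, hx⟩ := Finset.card_eq_one.mp hcard1
  have hxS' : x ∈ S' ∧ x ∉ T2 := by
    have : x ∈ S' \ T2 := by rw [hx]; exact Finset.mem_singleton_self x
    exact ⟨(Finset.mem_sdiff.mp this).1, (Finset.mem_sdiff.mp this).2⟩
  have hxval : (x:ℕ) = (a:ℕ) ∨ (x:ℕ) = (b:ℕ) := by
    have h1 := hS'a x hxS'.1
    have h2 : ¬ ((b:ℕ)+1 ≤ (x:ℕ)) := by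
      intro hcon
      exact hxS'.2 (by simp only [hT2, Tk, Finset.mem_filter, Finset.mem_univ, true_and]; omega)
    omega
  have hS'eq : S' = insert x T2 := by
    have hun : S' = (S' \ T2) ∪ T2 := (Finset.sdiff_union_of_subset hT2S').symm
    rw [hun, hx]; ext y; simp [Finset.mem_union, Finset.mem_insert]
  rw [hS'eq, Finset.sum_insert hxS'.2]
  have : δ x ≤ max (δ a) (δ b) := by
    rcases hxval with hv | hv
    · have : x = a := by ext; omega
      subst this; exact le_max_left _ _
    · have : x = b := by ext; omega
      subst this; exact le_max_right _ _
  linarith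


end swap

section KfBasics
variable {ℓ : ℕ}

lemma Xv_fin (x : Fin ℓ) :
    Xv ℓ (x : ℕ) = algebraMap (MvPolynomial (Fin ℓ) ℤ) (Kf ℓ) (X x) := by
  rw [Xv, dif_pos x.isLt]

lemma Xv_ne_zero (x : Fin ℓ) : Xv ℓ (x : ℕ) ≠ 0 := by
  rw [Xv_fin]
  rw [map_ne_zero_iff _ (IsFractionRing.injective (MvPolynomial (Fin ℓ) ℤ) (Kf ℓ))]
  exact X_ne_zero x

lemma monK_ne_zero (β : Fin ℓ → ℤ) : monK ℓ β ≠ 0 := by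
  rw [monK]
  apply Finset.prod_ne_zero_iff.mpr
  intro x _
  exact zpow_ne_zero _ (Xv_ne_zero x)

lemma monK_add (β γ : Fin ℓ → ℤ) : monK ℓ (β + γ) = monK ℓ β * monK ℓ γ := by
  rw [monK, monK, monK, ← Finset.prod_mul_distrib]
  apply Finset.prod_congr rfl
  intro x _
  rw [Pi.add_apply, zpow_add₀ (Xv_ne_zero x)]

lemma monK_neg (β : Fin ℓ → ℤ) : monK ℓ (-β) = (monK ℓ β)⁻¹ := by
  rw [monK, monK, ← Finset.prod_inv_distrib]
  apply Finset.prod_congr rfl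
  intro x _
  rw [Pi.neg_apply, zpow_neg]

lemma monK_zero : monK ℓ 0 = 1 := by
  rw [monK]
  apply Finset.prod_eq_one
  intro x _
  exact zpow_zero _

lemma monK_zsmul (c : ℤ) (β : Fin ℓ → ℤ) : monK ℓ (c • β) = (monK ℓ β) ^ c := by
  induction c using Int.induction_on with
  | zero => rw [zero_smul, monK_zero, zpow_zero]
  | succ n ih =>
      have h1 : ((n:ℤ) + 1) • β = (n:ℤ) • β + β := by rw [add_smul, one_smul]
      rw [h1, monK_add, ih, ← zpow_add_one₀ (monK_ne_zero β)]
  | pred n ih =>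
      have h1 : (-(n:ℤ) - 1) • β = (-(n:ℤ)) • β + (-β) := by
        rw [sub_smul, one_smul, sub_eq_add_neg]
      rw [h1, monK_add, ih, monK_neg, ← zpow_sub_one₀ (monK_ne_zero β)]

lemma monK_single_exp (c : Fin ℓ) :
    monK ℓ (fun x => if x = c then 1 else 0) = Xv ℓ (c : ℕ) := by
  rw [monK, Finset.prod_eq_single c]
  · rw [if_pos rfl, zpow_one]
  · intro x _ hx
    rw [if_neg hx, zpow_zero]
  · intro h
    exact absurd (Finset.mem_univ c) h

lemma monK_rv {a b : Fin ℓ} (hne : a ≠ b) :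
    monK ℓ (rv a b) = Xv ℓ (a : ℕ) * (Xv ℓ (b : ℕ))⁻¹ := by
  have h1 : rv a b = (fun x => if x = a then (1:ℤ) else 0) + (-(fun x => if x = b then (1:ℤ) else 0)) := by
    rw [rv_eq_add hne]
    funext x
    simp only [Pi.add_apply, Pi.neg_apply]
    by_cases h : x = b <;> simp [h]
  rw [h1, monK_add, monK_neg, monK_single_exp, monK_single_exp]

end KfBasics

section KfSwap
variable {ℓ i : ℕ}

lemma swapAlg_eq (hi : i + 1 < ℓ) :
    swapAlg ℓ i = renameEquiv ℤ (Equiv.swap ⟨i, Nat.lt_of_succ_lt hi⟩ ⟨i + 1, hi⟩) := by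
  rw [swapAlg, dif_pos hi]

lemma swapK_algebraMap (p : MvPolynomial (Fin ℓ) ℤ) :
    swapK ℓ i (algebraMap _ _ p) = algebraMap _ _ (swapAlg ℓ i p) :=
  IsFractionRing.lift_algebraMap _ _

lemma swapK_Xv (hi : i + 1 < ℓ) (x : Fin ℓ) :
    swapK ℓ i (Xv ℓ (x:ℕ)) =
      Xv ℓ ((Equiv.swap (⟨i, Nat.lt_of_succ_lt hi⟩ : Fin ℓ) ⟨i + 1, hi⟩ x : Fin ℓ) : ℕ) := by
  rw [Xv_fin, swapK_algebraMap, swapAlg_eq hi, Xv_fin]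
  congr 1
  simp [renameEquiv_apply, rename_X]

lemma swapK_monK (hi : i + 1 < ℓ) (β : Fin ℓ → ℤ) :
    swapK ℓ i (monK ℓ β) =
      monK ℓ (β ∘ Equiv.swap (⟨i, Nat.lt_of_succ_lt hi⟩ : Fin ℓ) ⟨i + 1, hi⟩) := by
  set w := Equiv.swap (⟨i, Nat.lt_of_succ_lt hi⟩ : Fin ℓ) ⟨i + 1, hi⟩ with hw
  rw [monK, map_prod]
  have h1 : ∀ x : Fin ℓ, swapK ℓ i (Xv ℓ (x:ℕ) ^ β x) = Xv ℓ ((w x : Fin ℓ):ℕ) ^ β x := by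
    intro x
    rw [map_zpow₀, swapK_Xv hi]
  rw [Finset.prod_congr rfl (fun x _ => h1 x), monK]
  have h2 : ∀ x : Fin ℓ, Xv ℓ ((w x : Fin ℓ):ℕ) ^ β x =
      (fun y : Fin ℓ => Xv ℓ (y:ℕ) ^ β (w y)) (w x) := by
    intro x
    simp only []
    congr 2
    rw [hw, Equiv.swap_apply_self]
  rw [Finset.prod_congr rfl (fun x _ => h2 x)]
  exact Equiv.prod_comp w (fun y : Fin ℓ => Xv ℓ (y:ℕ) ^ β (w y))

end KfSwap

section EDef
variable {ℓ : ℕ}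

def E (ℓ : ℕ) : ((Fin ℓ → ℤ) →₀ ℤ) →+ Kf ℓ :=
  AddMonoidHom.mk' (fun d => d.sum fun β k => (k : Kf ℓ) * monK ℓ β)
    (fun x y => Finsupp.sum_add_index' (fun β => by rw [Int.cast_zero, zero_mul])
      (fun β k1 k2 => by rw [Int.cast_add, add_mul]))

lemma E_apply (d : (Fin ℓ → ℤ) →₀ ℤ) : E ℓ d = d.sum fun β k => (k : Kf ℓ) * monK ℓ β := rfl

lemma E_single (β : Fin ℓ → ℤ) (k : ℤ) : E ℓ (Finsupp.single β k) = (k : Kf ℓ) * monK ℓ β := by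
  rw [E_apply]
  exact Finsupp.sum_single_index (by rw [Int.cast_zero, zero_mul])

def demHom (ℓ i : ℕ) : Kf ℓ →+ Kf ℓ :=
  AddMonoidHom.mk' (dem ℓ i) (fun x y => by
    unfold dem
    rw [map_add, ← add_div]
    congr 1
    ring)

lemma demHom_apply {i : ℕ} (f : Kf ℓ) : demHom ℓ i f = dem ℓ i f := rfl

end EDef

section Geom
variable {K : Type*} [Field K] {A B G Y : K}

lemma geom_pos (hGne : G ≠ 0) (hBG : B * G = A) :
    ∀ n : ℕ, (∑ j ∈ Finset.range (n+1), Y * G^(-(j:ℤ))) * (A - B) = A*Y - B*Y*G^(-(n:ℤ)) := by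
  intro n
  induction n with
  | zero => simp; ring
  | succ n ih =>
      rw [Finset.sum_range_succ, add_mul, ih]
      have h1 : G^(-((n:ℤ)+1)) * A = B * G^(-(n:ℤ)) := by
        rw [← hBG]
        rw [show -((n:ℤ)+1) = -(n:ℤ) + (-1) by ring, zpow_add₀ hGne]
        rw [zpow_neg_one]
        field_simp
      have h2 : ((n:ℕ)+1 : ℤ) = (n:ℤ)+1 := by push_cast; ring
      calc A*Y - B*Y*G^(-(n:ℤ)) + Y * G^(-(((n:ℕ)+1:ℕ)):ℤ) * (A - B)
          = A*Y - B*Y*G^(-(n:ℤ)) + Y * G ^ (-((n:ℤ)+1)) * (A - B) := by push_cast; ring_nf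
        _ = A*Y - B*Y*G^(-(n:ℤ)) + Y * (G ^ (-((n:ℤ)+1)) * A) - Y * G ^ (-((n:ℤ)+1)) * B := by ring
        _ = A*Y - B*Y*G^(-((n:ℤ)+1)) := by rw [h1]; ring
        _ = A*Y - B*Y*G^(-(((n:ℕ)+1:ℕ)):ℤ) := by push_cast; ring_nf

lemma geom_neg (hGne : G ≠ 0) (hBG : B * G = A) :
    ∀ n : ℕ, (∑ j ∈ Finset.range n, Y * G^((j:ℤ)+1)) * (A - B) = A*Y*G^(n:ℤ) - A*Y := by
  intro n
  induction n with
  | zero => simp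
  | succ n ih =>
      rw [Finset.sum_range_succ, add_mul, ih]
      have h1 : B * G^((n:ℤ)+1) = A * G^(n:ℤ) := by
        rw [← hBG, zpow_add₀ hGne, zpow_one]
        ring
      calc A*Y*G^(n:ℤ) - A*Y + Y * G^((n:ℤ)+1) * (A - B)
          = A*Y*G^(n:ℤ) - A*Y + Y * G^((n:ℤ)+1) * A - Y * (B * G^((n:ℤ)+1)) := by ring
        _ = A*Y*G^(n:ℤ) - A*Y + Y * G^((n:ℤ)+1) * A - Y * (A * G^(n:ℤ)) := by rw [h1]
        _ = A*Y*G^(((n:ℕ)+1:ℕ):ℤ) - A*Y := by push_cast; ring_nf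

end Geom

section DemC
variable {ℓ i : ℕ}

/-- combinatorial model of the Demazure operator on a single monomial. -/
def demCm (hi : i + 1 < ℓ) (β : Fin ℓ → ℤ) : (Fin ℓ → ℤ) →₀ ℤ :=
  if 0 ≤ β ⟨i, Nat.lt_of_succ_lt hi⟩ - β ⟨i+1, hi⟩ then
    ∑ j ∈ Finset.range ((β ⟨i, Nat.lt_of_succ_lt hi⟩ - β ⟨i+1, hi⟩).toNat + 1),
      Finsupp.single (β - (j:ℤ) • rv ⟨i, Nat.lt_of_succ_lt hi⟩ ⟨i+1, hi⟩) 1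
  else
    -∑ j ∈ Finset.range ((-(β ⟨i, Nat.lt_of_succ_lt hi⟩ - β ⟨i+1, hi⟩)).toNat - 1),
      Finsupp.single (β - (-(j:ℤ)-1) • rv ⟨i, Nat.lt_of_succ_lt hi⟩ ⟨i+1, hi⟩) 1

lemma monK_sub_smul_rv (hi : i + 1 < ℓ) (β : Fin ℓ → ℤ) (c : ℤ) :
    monK ℓ (β - c • rv (⟨i, Nat.lt_of_succ_lt hi⟩ : Fin ℓ) ⟨i+1, hi⟩) =
      monK ℓ β * (monK ℓ (rv (⟨i, Nat.lt_of_succ_lt hi⟩ : Fin ℓ) ⟨i+1, hi⟩))^(-c) := by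
  have h1 : β - c • rv (⟨i, Nat.lt_of_succ_lt hi⟩ : Fin ℓ) ⟨i+1, hi⟩ =
      β + (-c) • rv (⟨i, Nat.lt_of_succ_lt hi⟩ : Fin ℓ) ⟨i+1, hi⟩ := by
    funext x
    simp only [Pi.sub_apply, Pi.add_apply, Pi.smul_apply, smul_eq_mul]
    ring
  rw [h1, monK_add, monK_zsmul]

lemma ab_ne (hi : i + 1 < ℓ) : (⟨i, Nat.lt_of_succ_lt hi⟩ : Fin ℓ) ≠ ⟨i+1, hi⟩ := by
  intro h
  have := congrArg Fin.val h
  simp at this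

lemma Xv_ab_ne (hi : i + 1 < ℓ) : Xv ℓ i ≠ Xv ℓ (i+1) := by
  have ha : Xv ℓ i = Xv ℓ ((⟨i, Nat.lt_of_succ_lt hi⟩ : Fin ℓ) : ℕ) := rfl
  have hb : Xv ℓ (i+1) = Xv ℓ ((⟨i+1, hi⟩ : Fin ℓ) : ℕ) := rfl
  rw [ha, hb, Xv_fin, Xv_fin]
  intro h
  have := IsFractionRing.injective (MvPolynomial (Fin ℓ) ℤ) (Kf ℓ) h
  exact ab_ne hi (X_injective this)

lemma dem_monK (hi : i + 1 < ℓ) (β : Fin ℓ → ℤ) :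
    dem ℓ i (monK ℓ β) = E ℓ (demCm hi β) := by
  set a : Fin ℓ := ⟨i, Nat.lt_of_succ_lt hi⟩ with ha
  set b : Fin ℓ := ⟨i+1, hi⟩ with hb
  have hne : a ≠ b := ab_ne hi
  set G := monK ℓ (rv a b) with hG
  set Y := monK ℓ β with hY
  set A := Xv ℓ i with hA
  set B := Xv ℓ (i+1) with hB
  have hAa : A = Xv ℓ (a:ℕ) := rfl
  have hBb : B = Xv ℓ (b:ℕ) := rfl
  have hAne : A ≠ 0 := by rw [hAa]; exact Xv_ne_zero a
  have hBne : B ≠ 0 := by rw [hBb]; exact Xv_ne_zero b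
  have hGne : G ≠ 0 := monK_ne_zero _
  have hABne : A - B ≠ 0 := sub_ne_zero.mpr (Xv_ab_ne hi)
  have hGAB : G = A * B⁻¹ := by rw [hG, monK_rv hne, hAa, hBb]
  have hBG : B * G = A := by rw [hGAB]; field_simp
  set t : ℤ := β a - β b with hT
  -- the swap part
  have hswap : swapK ℓ i (monK ℓ β) = Y * G^(-t) := by
    rw [swapK_monK hi β]
    have hcomp : β ∘ Equiv.swap a b = β - t • rv a b := by
      rw [comp_swap_eq hne]
      funext x
      simp only [Pi.sub_apply, Pi.smul_apply, smul_eq_mul]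
      rw [hT]
    rw [hcomp, monK_sub_smul_rv hi]
  unfold dem
  rw [hswap]
  rw [div_eq_iff hABne]
  by_cases ht : 0 ≤ t
  · have hdemCm : demCm hi β =
        ∑ j ∈ Finset.range (t.toNat + 1), Finsupp.single (β - (j:ℤ) • rv a b) 1 := by
      rw [demCm, if_pos (show (0:ℤ) ≤ β ⟨i, Nat.lt_of_succ_lt hi⟩ - β ⟨i+1, hi⟩ from ht)]
    rw [hdemCm, map_sum]
    have hterm : ∀ j : ℕ, E ℓ (Finsupp.single (β - (j:ℤ) • rv a b) 1) = Y * G^(-(j:ℤ)) := by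
      intro j
      rw [E_single, monK_sub_smul_rv hi, Int.cast_one, one_mul]
    rw [Finset.sum_congr rfl (fun j _ => hterm j)]
    have := geom_pos (Y := Y) hGne hBG t.toNat
    rw [Int.toNat_of_nonneg ht] at this
    rw [← hA, ← hB]
    linear_combination -this
  · push_neg at ht
    have hdemCm : demCm hi β =
        -∑ j ∈ Finset.range ((-t).toNat - 1), Finsupp.single (β - (-(j:ℤ)-1) • rv a b) 1 := by
      rw [demCm, if_neg (show ¬ (0:ℤ) ≤ β ⟨i, Nat.lt_of_succ_lt hi⟩ - β ⟨i+1, hi⟩ from not_le.mpr ht)]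
    rw [hdemCm, map_neg, map_sum]
    have hterm : ∀ j : ℕ, E ℓ (Finsupp.single (β - (-(j:ℤ)-1) • rv a b) 1) = Y * G^((j:ℤ)+1) := by
      intro j
      rw [E_single, monK_sub_smul_rv hi, Int.cast_one, one_mul,
        show -(-(j:ℤ)-1) = (j:ℤ)+1 from by ring]
    rw [Finset.sum_congr rfl (fun j _ => hterm j)]
    set u : ℕ := (-t).toNat - 1 with hu
    have hut : ((u:ℤ)+1) = -t := by
      have h1 : (1:ℕ) ≤ (-t).toNat := by omega
      rw [hu]
      push_cast [h1]
      omega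
    have := geom_neg (Y := Y) hGne hBG u
    have hGu : A*Y*G^(u:ℤ) = B*Y*G^(-t) := by
      rw [← hBG, ← hut]
      rw [zpow_add₀ hGne, zpow_one]
      ring
    rw [← hA, ← hB]
    linear_combination this + hGu

/-- combinatorial model of the Demazure operator. -/
def demC (hi : i + 1 < ℓ) (d : (Fin ℓ → ℤ) →₀ ℤ) : (Fin ℓ → ℤ) →₀ ℤ :=
  d.sum fun β k => k • demCm hi β

lemma E_demC (hi : i + 1 < ℓ) (d : (Fin ℓ → ℤ) →₀ ℤ) :
    E ℓ (demC hi d) = dem ℓ i (E ℓ d) := by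
  rw [demC, map_finsuppSum]
  have h1 : ∀ (β : Fin ℓ → ℤ) (k : ℤ), E ℓ (k • demCm hi β) = (k:Kf ℓ) * dem ℓ i (monK ℓ β) := by
    intro β k
    rw [map_zsmul, dem_monK hi, zsmul_eq_mul]
  have h2 : dem ℓ i (E ℓ d) = d.sum fun β k => (k:Kf ℓ) * dem ℓ i (monK ℓ β) := by
    rw [← demHom_apply, E_apply, map_finsuppSum]
    apply Finsupp.sum_congr
    intro β _
    rw [show (d β : Kf ℓ) * monK ℓ β = (d β) • monK ℓ β from (zsmul_eq_mul _ _).symm,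
      map_zsmul, demHom_apply, zsmul_eq_mul]
  rw [h2]
  apply Finsupp.sum_congr
  intro β _
  exact h1 β (d β)

end DemC

section Einj
variable {ℓ : ℕ}

lemma monK_nonneg_eq (ν : Fin ℓ → ℤ) (hν : ∀ x, 0 ≤ ν x) :
    monK ℓ ν = algebraMap (MvPolynomial (Fin ℓ) ℤ) (Kf ℓ)
      (monomial (Finsupp.equivFunOnFinite.symm fun x => (ν x).toNat) 1) := by
  rw [monK]
  have h1 : ∀ x : Fin ℓ, Xv ℓ (x:ℕ) ^ ν x =
      algebraMap (MvPolynomial (Fin ℓ) ℤ) (Kf ℓ) ((X x : MvPolynomial (Fin ℓ) ℤ) ^ (ν x).toNat) := by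
    intro x
    rw [Xv_fin, map_pow, ← zpow_natCast, Int.toNat_of_nonneg (hν x)]
  rw [Finset.prod_congr rfl (fun x _ => h1 x), ← map_prod]
  congr 1
  rw [MvPolynomial.monomial_eq, C_1, one_mul, Finsupp.prod_fintype]
  · apply Finset.prod_congr rfl
    intro x _
    congr 1
  · intro x
    exact pow_zero _

lemma Einj {d : (Fin ℓ → ℤ) →₀ ℤ} (h : E ℓ d = 0) : d = 0 := by
  classical
  by_contra hd
  have hne : d.support.Nonempty := Finsupp.support_nonempty_iff.mpr hd
  set μ : Fin ℓ → ℤ := fun x => d.support.sup' hne fun β => max 0 (-(β x)) with hμdef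
  have hμ : ∀ β ∈ d.support, ∀ x, 0 ≤ β x + μ x := by
    intro β hβ x
    have h1 : max 0 (-(β x)) ≤ μ x := Finset.le_sup' (f := fun β => max 0 (-(β x))) hβ
    have h2 : -(β x) ≤ μ x := le_trans (le_max_right _ _) h1
    linarith
  set nn : (Fin ℓ → ℤ) → (Fin ℓ →₀ ℕ) :=
    fun β => Finsupp.equivFunOnFinite.symm fun x => (β x + μ x).toNat with hnn
  have hkey : ∑ β ∈ d.support, (monomial (nn β) (d β) : MvPolynomial (Fin ℓ) ℤ) = 0 := by
    apply IsFractionRing.injective (MvPolynomial (Fin ℓ) ℤ) (Kf ℓ)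
    rw [map_zero, map_sum]
    have hterm : ∀ β ∈ d.support,
        algebraMap (MvPolynomial (Fin ℓ) ℤ) (Kf ℓ) (monomial (nn β) (d β)) =
          ((d β : ℤ) : Kf ℓ) * monK ℓ (β + μ) := by
      intro β hβ
      have hmono : (monomial (nn β) (d β) : MvPolynomial (Fin ℓ) ℤ) =
          C (d β) * monomial (nn β) 1 := by
        rw [C_mul_monomial, mul_one]
      rw [hmono, map_mul, monK_nonneg_eq (β + μ) (fun x => hμ β hβ x)]
      congr 1
      rw [show (C (d β) : MvPolynomial (Fin ℓ) ℤ) = ((d β : ℤ) : MvPolynomial (Fin ℓ) ℤ) from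
          (map_intCast C (d β)), map_intCast]
    rw [Finset.sum_congr rfl hterm]
    have hEmul : ∑ β ∈ d.support, ((d β : ℤ) : Kf ℓ) * monK ℓ (β + μ) = (E ℓ d) * monK ℓ μ := by
      rw [E_apply, Finsupp.sum, Finset.sum_mul]
      apply Finset.sum_congr rfl
      intro β _
      rw [monK_add, mul_assoc]
    rw [hEmul, h, zero_mul]
  obtain ⟨β₀, hβ₀⟩ := hne
  have hcoeff := congrArg (coeff (nn β₀)) hkey
  rw [coeff_zero, coeff_sum] at hcoeff
  have hterm2 : ∀ β ∈ d.support, β ≠ β₀ → coeff (nn β₀) (monomial (nn β) (d β)) = 0 := by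
    intro β hβ hne'
    rw [coeff_monomial, if_neg]
    intro hcon
    apply hne'
    funext x
    have := congrArg (fun f : Fin ℓ →₀ ℕ => f x) hcon
    simp only [hnn, Finsupp.coe_equivFunOnFinite_symm] at this
    have h1 := hμ β hβ x
    have h2 := hμ β₀ hβ₀ x
    omega
  rw [Finset.sum_eq_single_of_mem β₀ hβ₀ hterm2, coeff_monomial, if_pos rfl] at hcoeff
  exact (Finsupp.mem_support_iff.mp hβ₀) hcoeff

end Einj

section DemCmSupp
variable {ℓ i : ℕ}

lemma demCm_support (hi : i + 1 < ℓ) (β : Fin ℓ → ℤ) {γ : Fin ℓ → ℤ}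
    (hγ : γ ∈ (demCm hi β).support) :
    ∃ c : ℤ, γ = β - c • rv (⟨i, Nat.lt_of_succ_lt hi⟩ : Fin ℓ) ⟨i+1, hi⟩ ∧
      ((0 ≤ c ∧ c ≤ β ⟨i, Nat.lt_of_succ_lt hi⟩ - β ⟨i+1, hi⟩) ∨
       (β ⟨i, Nat.lt_of_succ_lt hi⟩ - β ⟨i+1, hi⟩ ≤ c ∧ c ≤ 0)) := by
  classical
  set t : ℤ := β ⟨i, Nat.lt_of_succ_lt hi⟩ - β ⟨i+1, hi⟩ with ht
  rw [demCm] at hγ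
  by_cases h0 : 0 ≤ t
  · rw [if_pos (show (0:ℤ) ≤ β ⟨i, Nat.lt_of_succ_lt hi⟩ - β ⟨i+1, hi⟩ from h0)] at hγ
    have := Finsupp.support_finset_sum hγ
    obtain ⟨j, hj, hmem⟩ := Finset.mem_biUnion.mp this
    have := Finsupp.support_single_subset hmem
    rw [Finset.mem_singleton] at this
    refine ⟨(j:ℤ), this, Or.inl ⟨by positivity, ?_⟩⟩
    rw [Finset.mem_range] at hj
    omega
  · rw [if_neg (show ¬ (0:ℤ) ≤ β ⟨i, Nat.lt_of_succ_lt hi⟩ - β ⟨i+1, hi⟩ from h0)] at hγ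
    rw [Finsupp.support_neg] at hγ
    have := Finsupp.support_finset_sum hγ
    obtain ⟨j, hj, hmem⟩ := Finset.mem_biUnion.mp this
    have := Finsupp.support_single_subset hmem
    rw [Finset.mem_singleton] at this
    refine ⟨-(j:ℤ)-1, this, Or.inr ⟨?_, by omega⟩⟩
    rw [Finset.mem_range] at hj
    omega

lemma demCm_top (hi : i + 1 < ℓ) (β : Fin ℓ → ℤ)
    (hpos : 0 < β ⟨i, Nat.lt_of_succ_lt hi⟩ - β ⟨i+1, hi⟩) :
    demCm hi β (β - (β ⟨i, Nat.lt_of_succ_lt hi⟩ - β ⟨i+1, hi⟩) •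
      rv (⟨i, Nat.lt_of_succ_lt hi⟩ : Fin ℓ) ⟨i+1, hi⟩) = 1 := by
  classical
  set a : Fin ℓ := ⟨i, Nat.lt_of_succ_lt hi⟩ with ha
  set b : Fin ℓ := ⟨i+1, hi⟩ with hb
  set t : ℤ := β a - β b with ht
  rw [demCm, if_pos (show (0:ℤ) ≤ β ⟨i, Nat.lt_of_succ_lt hi⟩ - β ⟨i+1, hi⟩ from le_of_lt hpos)]
  rw [Finsupp.finset_sum_apply]
  have hterm : ∀ j ∈ Finset.range (t.toNat + 1), j ≠ t.toNat →
      (Finsupp.single (β - (j:ℤ) • rv a b) 1 : (Fin ℓ → ℤ) →₀ ℤ) (β - t • rv a b) = 0 := by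
    intro j _ hj
    rw [Finsupp.single_apply, if_neg]
    intro hcon
    apply hj
    have hval := congrArg (fun f : Fin ℓ → ℤ => f a) hcon
    have hrva : rv a b a = 1 := by rw [rv, if_pos rfl]
    simp only [Pi.sub_apply, Pi.smul_apply, smul_eq_mul, hrva, mul_one] at hval
    omega
  rw [Finset.sum_eq_single_of_mem t.toNat (Finset.mem_range.mpr (by omega)) hterm,
    Finsupp.single_apply, if_pos]
  rw [Int.toNat_of_nonneg (le_of_lt hpos)]

end DemCmSupp

section Step
variable {ℓ i : ℕ}

lemma step (hi : i + 1 < ℓ) (α : Fin ℓ → ℤ)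
    (hlt : α ⟨i, Nat.lt_of_succ_lt hi⟩ < α ⟨i+1, hi⟩)
    (d : (Fin ℓ → ℤ) →₀ ℤ)
    (hd1 : d (α ∘ Equiv.swap (⟨i, Nat.lt_of_succ_lt hi⟩ : Fin ℓ) ⟨i+1, hi⟩) = 1)
    (hdB : ∀ β ∈ d.support,
      ((∑ x, β x) = ∑ x, (α ∘ Equiv.swap (⟨i, Nat.lt_of_succ_lt hi⟩ : Fin ℓ) ⟨i+1, hi⟩) x) ∧
      ∀ S : Finset (Fin ℓ), ∑ x ∈ S, β x ≤
        U S (α ∘ Equiv.swap (⟨i, Nat.lt_of_succ_lt hi⟩ : Fin ℓ) ⟨i+1, hi⟩)) :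
    (demC hi d) α = 1 ∧
      ∀ β ∈ (demC hi d).support, ((∑ x, β x) = ∑ x, α x) ∧
        ∀ S : Finset (Fin ℓ), ∑ x ∈ S, β x ≤ U S α := by
  classical
  set a : Fin ℓ := ⟨i, Nat.lt_of_succ_lt hi⟩ with ha
  set b : Fin ℓ := ⟨i+1, hi⟩ with hb
  have hab : (a : ℕ) + 1 = (b : ℕ) := rfl
  have hne : a ≠ b := ab_ne hi
  set w := Equiv.swap a b with hw
  set α' := α ∘ w with hα'
  set m : ℤ := α b - α a with hm
  have hmpos : 0 < m := by rw [hm]; omega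
  have hα'x : ∀ x, α' x = α x + m * rv a b x := by
    intro x
    rw [hα', hw, comp_swap_eq hne]
    simp only [hm]
    ring
  have hα'a : α' a = α b := by
    have := hα'x a
    rw [rv, if_pos rfl] at this
    rw [this]; ring
  have hα'b : α' b = α a := by
    have := hα'x b
    rw [rv, if_neg hne.symm, if_pos rfl] at this
    rw [this]; ring
  have hα'ab : α' a - α' b = m := by rw [hα'a, hα'b, hm]
  have hα'fun : α' = α + m • rv a b := by
    funext x
    rw [hα'x x, Pi.add_apply, Pi.smul_apply, smul_eq_mul]
  have hαfromα' : α = α' - m • rv a b := by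
    rw [hα'fun]; funext x; simp
  -- generic sum computation
  have hsum_shift : ∀ (β : Fin ℓ → ℤ) (c : ℤ) (S : Finset (Fin ℓ)),
      ∑ x ∈ S, (β + c • rv a b) x = ∑ x ∈ S, β x + c * ∑ x ∈ S, rv a b x := by
    intro β c S
    rw [Finset.mul_sum, ← Finset.sum_add_distrib]
    apply Finset.sum_congr rfl
    intro x _
    rw [Pi.add_apply, Pi.smul_apply, smul_eq_mul]
  have hsum_sub : ∀ (β : Fin ℓ → ℤ) (c : ℤ) (S : Finset (Fin ℓ)),
      ∑ x ∈ S, (β - c • rv a b) x = ∑ x ∈ S, β x - c * ∑ x ∈ S, rv a b x := by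
    intro β c S
    rw [Finset.mul_sum, ← Finset.sum_sub_distrib]
    apply Finset.sum_congr rfl
    intro x _
    rw [Pi.sub_apply, Pi.smul_apply, smul_eq_mul]
  have hrvuniv : ∑ x : Fin ℓ, rv a b x = 0 := by
    rw [sum_rv hne, if_pos (Finset.mem_univ a), if_pos (Finset.mem_univ b)]
    ring
  have htotα' : ∑ x, α' x = ∑ x, α x := by
    rw [hα']
    exact Equiv.sum_comp w α
  -- support bounds
  have hsupp : ∀ γ ∈ (demC hi d).support, ((∑ x, γ x) = ∑ x, α x) ∧
      ∀ S : Finset (Fin ℓ), ∑ x ∈ S, γ x ≤ U S α := by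
    intro γ hγ
    obtain ⟨β, hβ, hγ2⟩ := Finset.mem_biUnion.mp (Finsupp.support_sum hγ)
    have hγ3 : γ ∈ (demCm hi β).support := Finsupp.support_smul hγ2
    obtain ⟨c, hre, hcr⟩ := demCm_support hi β hγ3
    have hβB := hdB β hβ
    set tβ : ℤ := β a - β b with htβ
    constructor
    · rw [hre, hsum_sub β c Finset.univ, hrvuniv, mul_zero, sub_zero, hβB.1, htotα']
    · intro S
      have hCU := CU hab hlt S
      have e1 : ∑ x ∈ S, β x ≤ U S α' := hβB.2 S
      have e2 : ∑ x ∈ S, β x - tβ * ∑ x ∈ S, rv a b x ≤ U (S.image w) α' := by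
        have hβw : ∑ x ∈ S.image w, β x = ∑ x ∈ S, β x - tβ * ∑ x ∈ S, rv a b x := by
          rw [sum_swap_image]
          have hcompβ : ∀ x, β (w x) = (β - tβ • rv a b) x := by
            intro x
            have := congrFun (comp_swap_eq hne β) x
            rw [hw]
            simp only [Function.comp_apply] at this
            rw [this]
            simp only [Pi.sub_apply, Pi.smul_apply, smul_eq_mul]
            rw [htβ]
          rw [Finset.sum_congr rfl (fun x _ => hcompβ x), hsum_sub]
        rw [← hβw]
        exact hβB.2 (S.image w)
      calc ∑ x ∈ S, γ x = ∑ x ∈ S, β x - c * ∑ x ∈ S, rv a b x := by rw [hre, hsum_sub]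
        _ ≤ max (∑ x ∈ S, β x) (∑ x ∈ S, β x - tβ * ∑ x ∈ S, rv a b x) := between_bound hcr
        _ ≤ U S α := max_le (e1.trans hCU.1) (e2.trans hCU.2)
  refine ⟨?_, hsupp⟩
  -- the top coefficient
  have happ : (demC hi d) α = ∑ β ∈ d.support, d β * (demCm hi β) α := by
    rw [demC, Finsupp.sum_apply, Finsupp.sum]
    apply Finset.sum_congr rfl
    intro β _
    rw [Finsupp.smul_apply, smul_eq_mul]
  have hmem' : α' ∈ d.support := Finsupp.mem_support_iff.mpr (by rw [hd1]; omega)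
  have hvan : ∀ β ∈ d.support, β ≠ α' → d β * (demCm hi β) α = 0 := by
    intro β hβ hneq
    by_cases h0 : (demCm hi β) α = 0
    · rw [h0, mul_zero]
    exfalso
    have hmem : α ∈ (demCm hi β).support := Finsupp.mem_support_iff.mpr h0
    obtain ⟨c, hre, hcr⟩ := demCm_support hi β hmem
    have hβeq : β = α + c • rv a b := by
      rw [hre]
      funext x
      simp
      rw [← ha, ← hb]
      ring
    have hβB := hdB β hβ
    -- first functional : tail at i+1
    have haT1 : a ∉ Tk ℓ (i+1) := by
      simp only [Tk, Finset.mem_filter, Finset.mem_univ, true_and, ha, Fin.val_mk]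
      omega
    have hbT1 : b ∈ Tk ℓ (i+1) := by
      simp only [Tk, Finset.mem_filter, Finset.mem_univ, true_and, hb, Fin.val_mk]
      omega
    have hσ1 : ∑ x ∈ Tk ℓ (i+1), rv a b x = -1 := by
      rw [sum_rv hne, if_neg haT1, if_pos hbT1]
      ring
    have hc1 : m ≤ c := by
      have hβsum : ∑ x ∈ Tk ℓ (i+1), β x = ∑ x ∈ Tk ℓ (i+1), α x - c := by
        rw [hβeq, hsum_shift, hσ1]
        ring
      have hα'sum : ∑ x ∈ Tk ℓ (i+1), α' x = ∑ x ∈ Tk ℓ (i+1), α x - m := by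
        rw [hα'fun, hsum_shift, hσ1]
        ring
      have := hβB.2 (Tk ℓ (i+1))
      rw [U_Tk, hβsum, hα'sum] at this
      omega
    -- second functional : insert a (tail at i+2)
    have haT2 : a ∉ Tk ℓ ((b:ℕ)+1) := by
      simp only [Tk, Finset.mem_filter, Finset.mem_univ, true_and]
      omega
    have hbT2 : b ∉ Tk ℓ ((b:ℕ)+1) := by
      simp only [Tk, Finset.mem_filter, Finset.mem_univ, true_and]
      omega
    have haS : a ∈ insert a (Tk ℓ ((b:ℕ)+1)) := Finset.mem_insert_self _ _
    have hbS : b ∉ insert a (Tk ℓ ((b:ℕ)+1)) := by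
      intro hcon
      rcases Finset.mem_insert.mp hcon with h' | h'
      · exact hne h'.symm
      · exact hbT2 h'
    have hσ2 : ∑ x ∈ Tk ℓ ((b:ℕ)+1), rv a b x = 0 := by
      rw [sum_rv hne, if_neg haT2, if_neg hbT2]
      ring
    have hσ3 : ∑ x ∈ insert a (Tk ℓ ((b:ℕ)+1)), rv a b x = 1 := by
      rw [sum_rv hne, if_pos haS, if_neg hbS]
      ring
    have hc2 : c ≤ m := by
      have hβsum : ∑ x ∈ insert a (Tk ℓ ((b:ℕ)+1)), β x =
          α a + ∑ x ∈ Tk ℓ ((b:ℕ)+1), α x + c := by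
        rw [hβeq, hsum_shift, hσ3, Finset.sum_insert haT2]
        ring
      have hα'sum : ∑ x ∈ Tk ℓ ((b:ℕ)+1), α' x = ∑ x ∈ Tk ℓ ((b:ℕ)+1), α x := by
        rw [hα'fun, hsum_shift, hσ2]
        ring
      have hUb := U_insert_le hab α'
      have := (hβB.2 (insert a (Tk ℓ ((b:ℕ)+1)))).trans hUb
      rw [hβsum, hα'sum, hα'a, hα'b] at this
      have hmax : max (α b) (α a) = α b := max_eq_left (le_of_lt hlt)
      rw [hmax] at this
      omega
    have hceq : c = m := le_antisymm hc2 hc1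
    apply hneq
    rw [hβeq, hceq, hα'fun]
  rw [happ, Finset.sum_eq_single_of_mem α' hmem' hvan, hd1, one_mul]
  have htop := demCm_top hi α' (by rw [show α' ⟨i, Nat.lt_of_succ_lt hi⟩ - α' ⟨i+1, hi⟩ = m from hα'ab]; exact hmpos)
  have hpt : α' - (α' ⟨i, Nat.lt_of_succ_lt hi⟩ - α' ⟨i+1, hi⟩) • rv ⟨i, Nat.lt_of_succ_lt hi⟩ ⟨i+1, hi⟩ = α := by
    rw [show α' ⟨i, Nat.lt_of_succ_lt hi⟩ - α' ⟨i+1, hi⟩ = m from hα'ab]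
    rw [← ha, ← hb, ← hαfromα']
  rw [hpt] at htop
  exact htop

end Step

section Main
variable {ℓ : ℕ}

lemma baseGood (α : Fin ℓ → ℤ) :
    (Finsupp.single α (1:ℤ)) α = 1 ∧
      ∀ β ∈ (Finsupp.single α (1:ℤ)).support, ((∑ x, β x) = ∑ x, α x) ∧
        ∀ S : Finset (Fin ℓ), ∑ x ∈ S, β x ≤ U S α := by
  refine ⟨Finsupp.single_eq_same, ?_⟩
  intro β hβ
  have hβα : β = α := Finset.mem_singleton.mp (Finsupp.support_single_subset hβ)
  subst hβα
  exact ⟨rfl, fun S => sum_le_U S β⟩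

lemma main : ∀ (n : ℕ) (α : Fin ℓ → ℤ),
    ∃ d : (Fin ℓ → ℤ) →₀ ℤ, E ℓ d = keyAux ℓ n α ∧ d α = 1 ∧
      ∀ β ∈ d.support, ((∑ x, β x) = ∑ x, α x) ∧
        ∀ S : Finset (Fin ℓ), ∑ x ∈ S, β x ≤ U S α := by
  intro n
  induction n with
  | zero =>
      intro α
      refine ⟨Finsupp.single α 1, ?_, (baseGood α).1, (baseGood α).2⟩
      rw [E_single, Int.cast_one, one_mul]
      rfl
  | succ n ih =>
      intro α
      by_cases h : ∃ j : Fin ℓ, ascAt ℓ α (j : ℕ)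
      · have hspec := h.choose_spec
        unfold ascAt at hspec
        obtain ⟨hi, hlt⟩ := hspec
        have hswapVec : swapVec ℓ (h.choose : ℕ) α =
            α ∘ Equiv.swap (⟨(h.choose : ℕ), Nat.lt_of_succ_lt hi⟩ : Fin ℓ) ⟨(h.choose : ℕ)+1, hi⟩ := by
          unfold swapVec
          exact dif_pos hi
        obtain ⟨d', hE', h1', hB'⟩ := ih (swapVec ℓ (h.choose : ℕ) α)
        rw [hswapVec] at h1' hB'
        obtain ⟨htop, hbd⟩ := step hi α hlt d' h1' hB'
        refine ⟨demC hi d', ?_, htop, hbd⟩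
        rw [E_demC hi d', hE']
        show dem ℓ (h.choose : ℕ) (keyAux ℓ n (swapVec ℓ (h.choose : ℕ) α)) = keyAux ℓ (n+1) α
        conv_rhs => rw [keyAux]
        rw [dif_pos h]
      · refine ⟨Finsupp.single α 1, ?_, (baseGood α).1, (baseGood α).2⟩
        rw [E_single, Int.cast_one, one_mul]
        conv_rhs => rw [keyAux]
        rw [dif_neg h]

end Main

end PTAux

/-- Let `γ ∈ ℤ^ℓ` with `∑_{a=k}^{ℓ} γ_a < 0` for some `k ∈ [ℓ]`
(0-indexed: the sum of `γ_a` over indices `a ≥ k`, for some `k < ℓ`, is negative).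
Then the polynomial truncation of `x^γ` is zero: in any expansion of the monomial
`x^γ` as a ℤ-linear combination of key polynomials, every `α ∈ ℤ_{≥0}^ℓ` has
coefficient zero. -/
theorem polyTrunc_monomial_eq_zero (ℓ : ℕ) (γ : Fin ℓ → ℤ) (k : ℕ) (hk : k < ℓ)
    (hneg : (∑ a ∈ Finset.univ.filter fun a : Fin ℓ => k ≤ (a : ℕ), γ a) < 0)
    (c : (Fin ℓ → ℤ) →₀ ℤ) (hc : keyComb ℓ c = monK ℓ γ) :
    ∀ α : Fin ℓ → ℤ, (∀ i, 0 ≤ α i) → c α = 0 := by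
  classical
  intro α0 hα0
  by_contra hc0
  have hmain := fun α : Fin ℓ → ℤ => PTAux.main (ℓ := ℓ) (ℓ*ℓ) α
  choose dd hE hTop hBd using hmain
  have hPre : ∀ (α β : Fin ℓ → ℤ), β ∈ (dd α).support → PTAux.Pre ℓ β α := by
    intro α β hβ
    obtain ⟨htot, hbd⟩ := hBd α β hβ
    constructor
    · rw [PTAux.tl, PTAux.tl, PTAux.Tk_zero]
      exact htot
    · intro k'
      exact (hbd (PTAux.Tk ℓ k')).trans (le_of_eq (PTAux.U_Tk k' α))
  set D : (Fin ℓ → ℤ) →₀ ℤ := c.sum fun α kk => kk • dd α with hDdef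
  have hED : PTAux.E ℓ D = monK ℓ γ := by
    rw [hDdef, map_finsuppSum, ← hc, keyComb]
    apply Finsupp.sum_congr
    intro α _
    rw [map_zsmul, hE α]
    rfl
  have hD : D = Finsupp.single γ 1 := by
    apply eq_of_sub_eq_zero
    apply PTAux.Einj
    rw [map_sub, hED, PTAux.E_single, Int.cast_one, one_mul, sub_self]
  have hα0T : α0 ∈ c.support := Finsupp.mem_support_iff.mpr hc0
  set s' := c.support.filter (fun α => PTAux.Pre ℓ α0 α) with hs'
  have hα0s' : α0 ∈ s' := Finset.mem_filter.mpr ⟨hα0T, PTAux.Pre.refl α0⟩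
  obtain ⟨αs, hαs, hmax⟩ := Finset.exists_max_image s'
    (fun β => ∑ k' ∈ Finset.range ℓ, PTAux.tl ℓ k' β) ⟨α0, hα0s'⟩
  have hαsT : αs ∈ c.support := (Finset.mem_filter.mp hαs).1
  have hαsPre : PTAux.Pre ℓ α0 αs := (Finset.mem_filter.mp hαs).2
  have hcoeff : c αs = (Finsupp.single γ (1:ℤ)) αs := by
    rw [← hD, hDdef, Finsupp.sum_apply, Finsupp.sum]
    rw [Finset.sum_eq_single_of_mem αs hαsT ?_]
    · rw [Finsupp.smul_apply, hTop αs, smul_eq_mul, mul_one]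
    · intro β' hβ' hne'
      rw [Finsupp.smul_apply]
      rcases eq_or_ne ((dd β') αs) 0 with h0 | h0
      · rw [h0, smul_zero]
      exfalso
      have hmem := Finsupp.mem_support_iff.mpr h0
      have h1 : PTAux.Pre ℓ αs β' := hPre β' αs hmem
      have h2 : PTAux.Pre ℓ α0 β' := PTAux.Pre.trans hαsPre h1
      have hβ's' : β' ∈ s' := Finset.mem_filter.mpr ⟨hβ', h2⟩
      have h3 := PTAux.rank_lt h1 (Ne.symm hne')
      have h4 := hmax β' hβ's'
      linarith
  have hαsγ : αs = γ := by
    have hcs : c αs ≠ 0 := Finsupp.mem_support_iff.mp hαsT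
    rw [hcoeff, Finsupp.single_apply] at hcs
    by_contra hne2
    rw [if_neg (fun hcon => hne2 hcon.symm)] at hcs
    exact hcs rfl
  have hPre0γ : PTAux.Pre ℓ α0 γ := hαsγ ▸ hαsPre
  have h1 : PTAux.tl ℓ k α0 ≤ PTAux.tl ℓ k γ := hPre0γ.2 k
  have h2 : (0:ℤ) ≤ PTAux.tl ℓ k α0 := Finset.sum_nonneg fun x _ => hα0 x
  have h3 : PTAux.tl ℓ k γ < 0 := hneg
  linarith
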